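/- Let k be an algebraically closed field, let n ≥ 4 and let i satisfy 2 ≤ i ≤ n−2. Let S be the set of strictly upper triangular n×n matrices x over k with x_{i,i+1} = 0 and x^{n-2} ≠ 0 (note that x^{n-1} = 0 automatically for such x). Then S is the union of exactly three orbits under conjugation by the group B of upper triangular matrices of determinant 1: the subset of S where x_{i-1,i} = 0 is a single B-orbit, the subset where x_{i+1,i+2} = 0 is a single B-orbit, these two subsets are disjoint, and the remaining subset where both x_{i-1,i} ≠ 0 and x_{i+1,i+2} ≠ 0 is a single (dense) B-orbit. -/

import Mathlib

open Matrix Finset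

/-- A matrix is upper triangular. -/
def IsUpperTri {n : ℕ} {k : Type*} [Field k] (g : Matrix (Fin n) (Fin n) k) : Prop :=
  ∀ a b : Fin n, (b : ℕ) < (a : ℕ) → g a b = 0

/-- A matrix is strictly upper triangular. -/
def IsStrictUpperTri {n : ℕ} {k : Type*} [Field k] (x : Matrix (Fin n) (Fin n) k) : Prop :=
  ∀ a b : Fin n, (b : ℕ) ≤ (a : ℕ) → x a b = 0

/-- The orbit of `e` under conjugation by the group `B` of upper triangular matrices of
determinant `1`. -/
def Borbit {n : ℕ} {k : Type*} [Field k] (e : Matrix (Fin n) (Fin n) k) :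
    Set (Matrix (Fin n) (Fin n) k) :=
  { x | ∃ g : Matrix (Fin n) (Fin n) k, IsUpperTri g ∧ g.det = 1 ∧ x = g * e * g⁻¹ }

namespace ThreeOrb

variable {k : Type*} [Field k] {n : ℕ}

/-- entry access by naturals, 0 outside range -/
def ent (x : Matrix (Fin n) (Fin n) k) (a b : ℕ) : k :=
  if h : a < n ∧ b < n then x ⟨a, h.1⟩ ⟨b, h.2⟩ else 0

/-- superdiagonal entries -/
def sdg (x : Matrix (Fin n) (Fin n) k) (j : ℕ) : k := ent x j (j + 1)

lemma ent_eq (x : Matrix (Fin n) (Fin n) k) (a b : Fin n) : x a b = ent x a b := by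
  simp [ent, a.2, b.2]

lemma ent_mk (x : Matrix (Fin n) (Fin n) k) {a b : ℕ} (ha : a < n) (hb : b < n) :
    x ⟨a, ha⟩ ⟨b, hb⟩ = ent x a b := by simp [ent, ha, hb]

lemma ent_strict {x : Matrix (Fin n) (Fin n) k} (hx : IsStrictUpperTri x) {a b : ℕ}
    (h : b ≤ a) : ent x a b = 0 := by
  unfold ent
  split
  · exact hx _ _ h
  · rfl

lemma ent_upper {x : Matrix (Fin n) (Fin n) k} (hx : IsUpperTri x) {a b : ℕ}
    (h : b < a) : ent x a b = 0 := by
  unfold ent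
  split
  · exact hx _ _ h
  · rfl

lemma ent_mul (x y : Matrix (Fin n) (Fin n) k) {a b : ℕ} (ha : a < n) (hb : b < n) :
    ent (x * y) a b = ∑ c ∈ range n, ent x a c * ent y c b := by
  rw [← Fin.sum_univ_eq_sum_range (fun c => ent x a c * ent y c b) n]
  rw [← ent_mk _ ha hb, mul_apply]
  exact Finset.sum_congr rfl fun c _ => by rw [ent_eq x ⟨a, ha⟩ c, ent_eq y c ⟨b, hb⟩]

/-- entries of powers below the m-th diagonal vanish -/
lemma pow_ent_zero {x : Matrix (Fin n) (Fin n) k} (hx : IsStrictUpperTri x) :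
    ∀ (m : ℕ) {a b : ℕ}, b < a + m → ent (x ^ m) a b = 0 := by
  intro m
  induction m with
  | zero =>
    intro a b h
    unfold ent
    split
    · rw [pow_zero]
      exact Matrix.one_apply_ne (by simp; omega)
    · rfl
  | succ m ih =>
    intro a b h
    by_cases ha : a < n
    · by_cases hb : b < n
      · rw [pow_succ, ent_mul _ _ ha hb]
        apply Finset.sum_eq_zero
        intro c hc
        rcases lt_or_ge (c : ℕ) (a + m) with h1 | h1
        · rw [ih h1, zero_mul]
        · rw [ent_strict hx (by omega), mul_zero]
      · simp [ent, hb]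
    · simp [ent, ha]

/-- the m-th diagonal of x^m -/
lemma pow_ent_diag {x : Matrix (Fin n) (Fin n) k} (hx : IsStrictUpperTri x) :
    ∀ (m : ℕ) {a : ℕ}, a + m < n → ent (x ^ m) a (a + m) = ∏ c ∈ range m, sdg x (a + c) := by
  intro m
  induction m with
  | zero =>
    intro a h
    simp [ent, h, pow_zero, Matrix.one_apply]
    omega
  | succ m ih =>
    intro a h
    rw [pow_succ, ent_mul _ _ (by omega) (by omega)]
    rw [Finset.sum_eq_single (a + m)]
    · rw [ih (by omega), prod_range_succ, sdg]
      ring_nf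
    · intro c _ hc
      rcases lt_or_ge c (a + m) with h1 | h1
      · rw [pow_ent_zero hx m h1, zero_mul]
      · rw [ent_strict hx (by omega), mul_zero]
    · intro hmem
      exact absurd (Finset.mem_range.mpr (by omega)) hmem



lemma peelR {x : Matrix (Fin n) (Fin n) k} (hx : IsStrictUpperTri x) (m a : ℕ)
    (h : a + m + 2 < n) :
    ent (x ^ (m+1)) a (a+m+2) =
      ent (x ^ m) a (a+m) * ent x (a+m) (a+m+2)
        + ent (x ^ m) a (a+m+1) * sdg x (a+m+1) := by
  rw [pow_succ, ent_mul _ _ (by omega) (by omega)]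
  have hsub : ({a+m, a+m+1} : Finset ℕ) ⊆ range n := by
    intro c hc; simp at hc; rcases hc with h1 | h1 <;> simp [h1] <;> omega
  rw [← Finset.sum_subset hsub]
  · rw [Finset.sum_pair (by omega)]
    rfl
  · intro c _ hc
    simp at hc
    rcases lt_or_ge c (a + m) with h1 | h1
    · rw [pow_ent_zero hx m h1, zero_mul]
    · rw [ent_strict hx (by omega), mul_zero]

lemma peelL {x : Matrix (Fin n) (Fin n) k} (hx : IsStrictUpperTri x) (m a : ℕ)
    (h : a + m + 2 < n) :
    ent (x ^ (m+1)) a (a+m+2) =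
      sdg x a * ent (x ^ m) (a+1) (a+m+2)
        + ent x a (a+2) * ent (x ^ m) (a+2) (a+m+2) := by
  rw [pow_succ', ent_mul _ _ (by omega) (by omega)]
  have hsub : ({a+1, a+2} : Finset ℕ) ⊆ range n := by
    intro c hc; simp at hc; rcases hc with h1 | h1 <;> simp [h1] <;> omega
  rw [← Finset.sum_subset hsub]
  · rw [Finset.sum_pair (by omega)]
    rfl
  · intro c _ hc
    simp at hc
    rcases lt_or_ge c (a + 1) with h1 | h1
    · rw [ent_strict hx (by omega), zero_mul]
    · rw [pow_ent_zero hx m (by omega), mul_zero]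

/-- middle factor -/
def MID (x : Matrix (Fin n) (Fin n) k) (i : ℕ) : k :=
  ent x (i-2) i * sdg x i + sdg x (i-2) * ent x (i-1) (i+1)

section closed
variable {x : Matrix (Fin n) (Fin n) k} {i : ℕ}
variable (hx : IsStrictUpperTri x) (hn : 4 ≤ n) (hi1 : 2 ≤ i) (hi2 : i ≤ n - 2)
variable (h0 : sdg x (i-1) = 0)

include hx hn hi1 hi2 h0


lemma entA {a : ℕ} (ha : a ≤ i - 2) :
    ent (x ^ (i-1-a)) a i = (∏ c ∈ Ico a (i-2), sdg x c) * ent x (i-2) i := by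
  obtain ⟨m, rfl⟩ : ∃ m, i = a + m + 2 := ⟨i - 2 - a, by omega⟩
  rw [show a + m + 2 - 1 - a = m + 1 by omega, show a + m + 2 - 2 = a + m by omega] at *
  rw [show a + m + 2 - 1 = a + m + 1 by omega] at h0
  rw [peelR hx m a (by omega), h0, mul_zero, add_zero,
    pow_ent_diag hx _ (by omega), Finset.prod_Ico_eq_prod_range]
  rw [show a + m - a = m by omega]

lemma entB {a : ℕ} (ha : a ≤ i - 2) :
    ent (x ^ (i-a)) a (i+1) = (∏ c ∈ Ico a (i-2), sdg x c) * MID x i := by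
  obtain ⟨m, rfl⟩ : ∃ m, i = a + m + 2 := ⟨i - 2 - a, by omega⟩
  have hA := entA hx hn hi1 hi2 h0 ha
  unfold MID
  rw [show a + m + 2 - a = (m+1) + 1 by omega,
    show a + m + 2 + 1 = a + (m+1) + 2 by omega]
  rw [peelR hx (m+1) a (by omega)]
  rw [show a + (m+1) = a + m + 2 - 1 by omega, show a + m + 2 - 1 + 1 = a + m + 2 by omega,
    show a + m + 2 - 1 + 2 = a + m + 2 + 1 by omega]
  rw [show a + m + 2 - 1 - a = m + 1 by omega] at hA
  rw [hA]
  rw [show a + m + 2 - 1 = a + (m + 1) by omega, pow_ent_diag hx _ (by omega),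
    Finset.prod_range_succ]
  rw [show a + m + 2 - 2 = a + m by omega] at *
  rw [Finset.prod_Ico_eq_prod_range, show a + m - a = m by omega]
  have : ∀ c ∈ range m, sdg x (a + c) = sdg x (c + a) := fun c _ => by rw [add_comm]
  rw [Finset.prod_congr rfl this]
  ring

lemma entC {a : ℕ} (m : ℕ) (ha : a ≤ i - 2) (him : i ≤ a + m) (hlt : a + m + 1 < n) :
    ent (x ^ m) a (a+m+1) =
      (∏ c ∈ Ico a (i-2), sdg x c) * MID x i * (∏ c ∈ Icc (i+1) (a+m), sdg x c) := by
  induction m with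
  | zero => omega
  | succ m ih =>
    rcases Nat.lt_or_ge (a + m) i with hcase | hcase
    · -- a + m + 1 = i, i.e. m + 1 = i - a : base case via entB
      have hb : a + m + 1 = i := by omega
      have := entB hx hn hi1 hi2 h0 ha
      rw [show i - a = m + 1 by omega] at this
      rw [show a + (m+1) + 1 = i + 1 by omega, this, show a + (m+1) = i by omega,
        Finset.Icc_eq_empty (by omega), Finset.prod_empty, mul_one]
    · -- inductive step
      rw [show a + (m+1) + 1 = a + m + 2 by omega, peelR hx m a (by omega)]
      have hz : ent (x ^ m) a (a + m) = 0 := by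
        rw [pow_ent_diag hx _ (by omega)]
        apply Finset.prod_eq_zero (i := i - 1 - a) (Finset.mem_range.mpr (by omega))
        rw [show a + (i - 1 - a) = i - 1 by omega, h0]
      rw [hz, zero_mul, zero_add, ih (by omega) (by omega)]
      rw [show a + (m+1) = a + m + 1 by omega,
        show Finset.Icc (i+1) (a+m+1) = insert (a+m+1) (Finset.Icc (i+1) (a+m)) by
          ext c; simp [Finset.mem_Icc, Finset.mem_insert]; omega,
        Finset.prod_insert (by simp [Finset.mem_Icc])]
      ring

omit hx hn hi1 hi2 h0 in
lemma ent_zero (a b : ℕ) : ent (0 : Matrix (Fin n) (Fin n) k) a b = 0 := by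
  unfold ent; split <;> simp

lemma keyval :
    ent (x ^ (n-2)) 0 (n-1) =
      (∏ c ∈ range (i-2), sdg x c) * MID x i * (∏ c ∈ Icc (i+1) (n-2), sdg x c) := by
  have := entC hx hn hi1 hi2 h0 (a := 0) (n-2) (by omega) (by omega) (by omega)
  rw [show 0 + (n-2) + 1 = n - 1 by omega, show 0 + (n-2) = n-2 by omega] at this
  rw [this, Finset.range_eq_Ico]

lemma pow_n2_ne :
    x ^ (n-2) ≠ 0 ↔ ((∏ c ∈ range (i-2), sdg x c) ≠ 0 ∧ MID x i ≠ 0 ∧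
      (∏ c ∈ Icc (i+1) (n-2), sdg x c) ≠ 0) := by
  constructor
  · intro hne
    by_contra hcon
    apply hne
    have hkey : (∏ c ∈ range (i-2), sdg x c) * MID x i * (∏ c ∈ Icc (i+1) (n-2), sdg x c)
        = 0 := by
      rcases not_and_or.mp hcon with h | h
      · rw [not_ne_iff.mp h, zero_mul, zero_mul]
      rcases not_and_or.mp h with h' | h'
      · rw [not_ne_iff.mp h', mul_zero, zero_mul]
      · rw [not_ne_iff.mp h', mul_zero]
    ext a b
    simp only [Matrix.zero_apply]
    rw [ent_eq (x ^ (n-2)) a b]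
    rcases Nat.lt_or_ge (b : ℕ) ((a : ℕ) + (n-2)) with hb | hb
    · exact pow_ent_zero hx _ hb
    rcases Nat.lt_or_ge (b : ℕ) ((a : ℕ) + (n-1)) with hb2 | hb2
    · -- b = a + (n-2)
      have : (b : ℕ) = (a : ℕ) + (n - 2) := by omega
      rw [this, pow_ent_diag hx _ (by omega)]
      apply Finset.prod_eq_zero (i := i - 1 - (a:ℕ))
        (Finset.mem_range.mpr (by have := a.2; have := b.2; omega))
      rw [show (a:ℕ) + (i - 1 - (a:ℕ)) = i - 1 by have := a.2; have := b.2; omega, h0]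
    · have ha0 : (a : ℕ) = 0 := by have := b.2; omega
      have hb0 : (b : ℕ) = n - 1 := by have := b.2; omega
      rw [ha0, hb0, keyval hx hn hi1 hi2 h0, hkey]
  · intro ⟨h1, h2, h3⟩ hzero
    have := keyval hx hn hi1 hi2 h0 (x := x)
    rw [hzero, ent_zero] at this
    exact (mul_ne_zero (mul_ne_zero h1 h2) h3) this.symm

lemma xpow_n1_col (a : ℕ) : ent (x ^ (n-1)) a (n-1) = 0 := by
  rcases Nat.eq_zero_or_pos a with rfl | ha
  · have hd := pow_ent_diag hx (a := 0) (n-1) (by omega)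
    rw [zero_add] at hd
    rw [hd]
    apply Finset.prod_eq_zero (i := i - 1) (Finset.mem_range.mpr (by omega))
    rw [zero_add, h0]
  · exact pow_ent_zero hx _ (by omega)

end closed

/-- back-substitution solver for a strictly upper triangular system -/
noncomputable def bsolve (X : ℕ → ℕ → k) (z : ℕ → k) (top : k) (m : ℕ) : ℕ → k
  | d =>
    if d = m then top
    else if hd : 1 ≤ d ∧ d < m then
      (X (d-1) d)⁻¹ * (z (d-1) - ∑ c ∈ (Finset.Ioc d m).attach,
        X (d-1) c.1 * bsolve X z top m c.1)
    else 0
  termination_by d => m - d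
  decreasing_by
    · have := c.2
      simp only [Finset.mem_Ioc] at this
      omega

lemma bsolve_top (X : ℕ → ℕ → k) (z : ℕ → k) (top : k) (m : ℕ) :
    bsolve X z top m m = top := by
  rw [bsolve]
  simp

lemma bsolve_zero (X : ℕ → ℕ → k) (z : ℕ → k) (top : k) (m d : ℕ)
    (h : d = 0 ∨ m < d) (hm : 1 ≤ m) : bsolve X z top m d = 0 := by
  rw [bsolve]
  rw [if_neg (by omega), dif_neg (by omega)]

lemma bsolve_mid (X : ℕ → ℕ → k) (z : ℕ → k) (top : k) (m d : ℕ)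
    (h1 : 1 ≤ d) (h2 : d < m) :
    bsolve X z top m d = (X (d-1) d)⁻¹ * (z (d-1) -
      ∑ c ∈ Finset.Ioc d m, X (d-1) c * bsolve X z top m c) := by
  rw [bsolve]
  rw [if_neg (by omega), dif_pos ⟨h1, h2⟩, ← Finset.sum_attach (Finset.Ioc d m)
    (fun c => X (d-1) c * bsolve X z top m c)]

lemma bsolve_row {X : ℕ → ℕ → k} {z : ℕ → k} {top : k} {m : ℕ} (N : ℕ)
    (hstrict : ∀ a b, b ≤ a → X a b = 0)
    (hT : ∀ r, r + 2 ≤ m → X r (r+1) ≠ 0)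
    (htop : X (m-1) m * top = z (m-1))
    (hm : 1 ≤ m) (hmN : m < N) (r : ℕ) (hr : r < m) :
    ∑ c ∈ Finset.range N, X r c * bsolve X z top m c = z r := by
  rcases Nat.lt_or_ge r (m-1) with hcase | hcase
  · -- r ≤ m - 2
    have hsum : ∑ c ∈ Finset.range N, X r c * bsolve X z top m c
        = ∑ c ∈ Finset.Ioc r m, X r c * bsolve X z top m c := by
      symm
      apply Finset.sum_subset
      · intro c hc
        simp only [Finset.mem_Ioc] at hc
        exact Finset.mem_range.mpr (by omega)
      · intro c _ hc
        simp only [Finset.mem_Ioc, not_and, not_le] at hc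
        rcases Nat.lt_or_ge r c with h1 | h1
        · rw [bsolve_zero _ _ _ _ _ (Or.inr (hc h1)) hm, mul_zero]
        · rw [hstrict _ _ h1, zero_mul]
    rw [hsum, show Finset.Ioc r m = insert (r+1) (Finset.Ioc (r+1) m) by
      ext c; simp only [Finset.mem_Ioc, Finset.mem_insert]; omega]
    rw [Finset.sum_insert (by simp only [Finset.mem_Ioc]; omega)]
    rw [bsolve_mid _ _ _ _ _ (by omega) (by omega)]
    rw [show r + 1 - 1 = r by omega]
    rw [← mul_assoc, mul_inv_cancel₀ (hT r (by omega)), one_mul]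
    ring
  · -- r = m - 1
    have hrm : r = m - 1 := by omega
    subst hrm
    rw [Finset.sum_eq_single_of_mem m (Finset.mem_range.mpr hmN)]
    · rw [bsolve_top]
      exact htop
    · intro c _ hc
      rcases Nat.lt_or_ge (m-1) c with h1 | h1
      · rw [bsolve_zero _ _ _ _ _ (Or.inr (by omega)) hm, mul_zero]
      · rw [hstrict _ _ h1, zero_mul]

lemma bsolve_row_ge {X : ℕ → ℕ → k} {z : ℕ → k} {top : k} {m : ℕ} (N : ℕ)
    (hstrict : ∀ a b, b ≤ a → X a b = 0) (hm : 1 ≤ m) (r : ℕ) (hr : m ≤ r) :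
    ∑ c ∈ Finset.range N, X r c * bsolve X z top m c = 0 := by
  apply Finset.sum_eq_zero
  intro c _
  rcases Nat.lt_or_ge m c with h1 | h1
  · rw [bsolve_zero _ _ _ _ _ (Or.inr h1) hm, mul_zero]
  · rw [hstrict _ _ (by omega), zero_mul]

def psif (n m b : ℕ) : ℕ := if m < b then n - 1 - b else n - 2 - b

/-- candidate conjugating matrix: columns are x-power images of the last basis vector,
with column m given by back-substitution -/
noncomputable def hmat (x : Matrix (Fin n) (Fin n) k) (m : ℕ) (zf : ℕ → k) (top : k) :
    Matrix (Fin n) (Fin n) k :=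
  Matrix.of fun a b => if (b : ℕ) = m then bsolve (ent x) zf top m a
    else ent (x ^ psif n m (b : ℕ)) a (n-1)

section hm

variable {x : Matrix (Fin n) (Fin n) k} {i m : ℕ} {zf : ℕ → k} {top : k}
variable (hx : IsStrictUpperTri x) (hn : 4 ≤ n) (hi1 : 2 ≤ i) (hi2 : i ≤ n - 2)
variable (h0 : sdg x (i-1) = 0) (hm1 : i - 1 ≤ m) (hm2 : m ≤ i)

include hx hn hi1 hi2 h0 hm1 hm2

lemma hmat_tri (hsp : ∀ b, b < m → ∃ c, b+1 ≤ c ∧ c ≤ n-2 ∧ sdg x c = 0) :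
    ∀ a b : Fin n, (b : ℕ) < (a : ℕ) → hmat x m zf top a b = 0 := by
  intro a b hba
  have hbn := b.2
  have han := a.2
  show (if (b : ℕ) = m then _ else _) = 0
  by_cases hbm : (b : ℕ) = m
  · rw [if_pos hbm]
    exact bsolve_zero _ _ _ _ _ (Or.inr (by omega)) (by omega)
  · rw [if_neg hbm]
    unfold psif
    by_cases hmb : m < (b : ℕ)
    · rw [if_pos hmb]
      exact pow_ent_zero hx _ (by omega)
    · rw [if_neg hmb]
      rcases Nat.lt_or_ge ((b : ℕ) + 1) (a : ℕ) with hc | hc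
      · exact pow_ent_zero hx _ (by omega)
      · have haeq : (a : ℕ) = (b : ℕ) + 1 := by omega
        have hd := pow_ent_diag hx (a := (b:ℕ)+1) (n - 2 - (b:ℕ)) (by omega)
        rw [show (b:ℕ) + 1 + (n - 2 - (b:ℕ)) = n - 1 by omega] at hd
        rw [haeq, hd]
        obtain ⟨c, hc1, hc2, hc3⟩ := hsp (b : ℕ) (by omega)
        apply Finset.prod_eq_zero (i := c - ((b:ℕ)+1)) (Finset.mem_range.mpr (by omega))
        rw [show (b:ℕ) + 1 + (c - ((b:ℕ)+1)) = c by omega, hc3]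

lemma hmat_diag (hdlow : ∀ b, b < m → ent (x ^ (n-2-b)) b (n-1) ≠ 0)
    (hT3 : ∀ c, m+1 ≤ c → c ≤ n-2 → sdg x c ≠ 0) (htopne : top ≠ 0) :
    ∀ b : Fin n, hmat x m zf top b b ≠ 0 := by
  intro b
  have hbn := b.2
  show (if (b : ℕ) = m then _ else _) ≠ 0
  by_cases hbm : (b : ℕ) = m
  · rw [if_pos hbm, hbm, bsolve_top]
    exact htopne
  · rw [if_neg hbm]
    unfold psif
    by_cases hmb : m < (b : ℕ)
    · rw [if_pos hmb]
      have hd := pow_ent_diag hx (a := (b:ℕ)) (n - 1 - (b:ℕ)) (by omega)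
      rw [show (b:ℕ) + (n - 1 - (b:ℕ)) = n - 1 by omega] at hd
      rw [hd]
      rw [Finset.prod_ne_zero_iff]
      intro c hc
      simp only [Finset.mem_range] at hc
      exact hT3 _ (by omega) (by omega)
    · rw [if_neg hmb]
      exact hdlow _ (by omega)

omit hx hn hi1 hi2 h0 hm1 hm2 in
lemma col_step (q : ℕ) (a : Fin n) :
    ∑ c ∈ range n, ent x (a : ℕ) c * ent (x ^ q) c (n-1) = ent (x ^ (q+1)) (a : ℕ) (n-1) := by
  have hn' : 0 < n := a.pos
  rw [pow_succ', ent_mul _ _ a.2 (by omega)]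

omit hx hn hi1 hi2 h0 hm1 hm2 in
lemma hmat_apply (a b : Fin n) :
    hmat x m zf top a b = if (b : ℕ) = m then bsolve (ent x) zf top m (a : ℕ)
      else ent (x ^ psif n m (b : ℕ)) (a : ℕ) (n-1) := rfl

omit hx hn hi1 hi2 h0 hm1 hm2 in
lemma hmat_apply' (a : Fin n) {b : ℕ} (hb : b < n) :
    hmat x m zf top a ⟨b, hb⟩ = if b = m then bsolve (ent x) zf top m (a : ℕ)
      else ent (x ^ psif n m b) (a : ℕ) (n-1) := rfl

omit hx hn hi1 hi2 h0 hm1 hm2 in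
lemma mul_hmat (a b : Fin n) :
    (x * hmat x m zf top) a b = if (b : ℕ) = m
      then ∑ c ∈ range n, ent x (a : ℕ) c * bsolve (ent x) zf top m c
      else ent (x ^ (psif n m (b : ℕ) + 1)) (a : ℕ) (n-1) := by
  rw [mul_apply]
  simp only [hmat_apply]
  by_cases hbm : (b : ℕ) = m
  · simp only [if_pos hbm]
    rw [← Fin.sum_univ_eq_sum_range (fun c => ent x (a:ℕ) c * bsolve (ent x) zf top m c) n]
    exact Finset.sum_congr rfl fun c _ => by rw [ent_eq x a c]
  · simp only [if_neg hbm]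
    rw [← col_step (psif n m (b:ℕ)) a,
      ← Fin.sum_univ_eq_sum_range (fun c => ent x (a:ℕ) c * ent (x ^ psif n m (b:ℕ)) c (n-1)) n]
    exact Finset.sum_congr rfl fun c _ => by rw [ent_eq x a c]

end hm

section conj

variable {g e : Matrix (Fin n) (Fin n) k}

lemma upper_mul_strict (hg : IsUpperTri g) (he : IsStrictUpperTri e) :
    IsStrictUpperTri (g * e) := by
  intro a b hba
  rw [mul_apply]
  apply Finset.sum_eq_zero
  intro c _
  rcases Nat.lt_or_ge (c : ℕ) (a : ℕ) with h1 | h1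
  · rw [hg _ _ h1, zero_mul]
  · rw [he _ _ (by omega), mul_zero]

lemma strict_mul_upper (he : IsStrictUpperTri e) (hg : IsUpperTri g) :
    IsStrictUpperTri (e * g) := by
  intro a b hba
  rw [mul_apply]
  apply Finset.sum_eq_zero
  intro c _
  rcases le_or_gt (c : ℕ) (a : ℕ) with h1 | h1
  · rw [he _ _ h1, zero_mul]
  · rw [hg _ _ (by omega), mul_zero]

lemma upper_blockTri (hg : IsUpperTri g) : g.BlockTriangular id := by
  intro a b hab
  exact hg a b (by exact hab)

lemma det_eq_prod_diag (hg : IsUpperTri g) : g.det = ∏ b, g b b :=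
  Matrix.det_of_upperTriangular (upper_blockTri hg)

lemma diag_ne_zero (hg : IsUpperTri g) (hdet : g.det = 1) : ∀ a, g a a ≠ 0 := by
  have h := det_eq_prod_diag hg
  rw [hdet] at h
  intro a
  have hne : (∏ b, g b b) ≠ 0 := by rw [← h]; exact one_ne_zero
  exact Finset.prod_ne_zero_iff.mp hne a (Finset.mem_univ a)

lemma inv_upper (hg : IsUpperTri g) (hdet : g.det = 1) : IsUpperTri g⁻¹ := by
  have hu : IsUnit g.det := by rw [hdet]; exact isUnit_one
  have : Invertible g := g.invertibleOfIsUnitDet hu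
  intro a b hba
  exact Matrix.blockTriangular_inv_of_blockTriangular (upper_blockTri hg)
    (show (id b : Fin n) < id a from hba)

lemma inv_det_one (hdet : g.det = 1) : g⁻¹.det = 1 := by
  rw [Matrix.det_nonsing_inv, hdet]
  simp

lemma conj_strict (hg : IsUpperTri g) (hdet : g.det = 1) (he : IsStrictUpperTri e) :
    IsStrictUpperTri (g * e * g⁻¹) :=
  strict_mul_upper (upper_mul_strict hg he) (inv_upper hg hdet)

lemma conj_sdg (hg : IsUpperTri g) (hdet : g.det = 1) (he : IsStrictUpperTri e)
    {j : ℕ} (hj : j + 1 < n) :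
    ent (g * e * g⁻¹) j (j+1) =
      ent g j j * ent e j (j+1) * ent g⁻¹ (j+1) (j+1) := by
  have hge : ent (g * e) j (j+1) = ent g j j * ent e j (j+1) := by
    rw [ent_mul _ _ (by omega) (by omega), Finset.sum_eq_single_of_mem j
      (Finset.mem_range.mpr (by omega))]
    intro c _ hc
    rcases Nat.lt_or_ge c j with h1 | h1
    · rw [ent_upper hg h1, zero_mul]
    · rw [ent_strict he (by omega), mul_zero]
  rw [ent_mul _ _ (by omega) (by omega), Finset.sum_eq_single_of_mem (j+1)
    (Finset.mem_range.mpr (by omega)), hge]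
  intro c _ hc
  rcases Nat.lt_or_ge c (j+1) with h1 | h1
  · rw [ent_strict (upper_mul_strict hg he) (by omega), zero_mul]
  · rw [ent_upper (inv_upper hg hdet) (by omega), mul_zero]

lemma conj_pow (hdet : g.det = 1) (p : ℕ) :
    (g * e * g⁻¹) ^ p = g * e ^ p * g⁻¹ := by
  have hu : IsUnit g.det := by rw [hdet]; exact isUnit_one
  have h1 : g⁻¹ * g = 1 := Matrix.nonsing_inv_mul g hu
  induction p with
  | zero => rw [pow_zero, pow_zero, Matrix.mul_one, Matrix.mul_nonsing_inv g hu]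
  | succ p ih =>
    rw [pow_succ, pow_succ, ih]
    calc g * e ^ p * g⁻¹ * (g * e * g⁻¹)
        = g * e ^ p * ((g⁻¹ * g) * (e * g⁻¹)) := by
          simp only [Matrix.mul_assoc]
      _ = g * (e ^ p * e) * g⁻¹ := by rw [h1, Matrix.one_mul]; simp only [Matrix.mul_assoc]

lemma conj_ne_zero (hdet : g.det = 1) (p : ℕ) (he : e ^ p ≠ 0) :
    (g * e * g⁻¹) ^ p ≠ 0 := by
  have hu : IsUnit g.det := by rw [hdet]; exact isUnit_one
  rw [conj_pow hdet p]
  intro hzero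
  apply he
  have : g⁻¹ * (g * e ^ p * g⁻¹) * g = e ^ p := by
    calc g⁻¹ * (g * e ^ p * g⁻¹) * g = (g⁻¹ * g) * e ^ p * (g⁻¹ * g) := by
          simp only [Matrix.mul_assoc]
      _ = e ^ p := by rw [Matrix.nonsing_inv_mul g hu, Matrix.one_mul, Matrix.mul_one]
  rw [← this, hzero, Matrix.mul_zero, Matrix.zero_mul]

end conj

variable {i d p : ℕ}

/-- representative matrices: superdiagonal ones except at rows `i-1` and `d`,
plus an extra 1 at `(p, p+2)` -/
def rep (n i d p : ℕ) : Matrix (Fin n) (Fin n) k :=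
  Matrix.of fun a b =>
    if ((b : ℕ) = (a : ℕ) + 1 ∧ (a : ℕ) ≠ i - 1 ∧ (a : ℕ) ≠ d) ∨
       ((a : ℕ) = p ∧ (b : ℕ) = p + 2) then 1 else 0

lemma rep_apply (a b : Fin n) :
    (rep n i d p : Matrix (Fin n) (Fin n) k) a b =
      if ((b : ℕ) = (a : ℕ) + 1 ∧ (a : ℕ) ≠ i - 1 ∧ (a : ℕ) ≠ d) ∨
        ((a : ℕ) = p ∧ (b : ℕ) = p + 2) then 1 else 0 := rfl

lemma rep_strict : IsStrictUpperTri (rep n i d p : Matrix (Fin n) (Fin n) k) := by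
  intro a b hba
  rw [rep_apply, if_neg]
  rintro (⟨h1, -, -⟩ | ⟨h1, h2⟩) <;> omega

lemma rep_ent {a b : ℕ} (ha : a < n) (hb : b < n) :
    ent (rep n i d p : Matrix (Fin n) (Fin n) k) a b =
      if (b = a + 1 ∧ a ≠ i - 1 ∧ a ≠ d) ∨ (a = p ∧ b = p + 2) then 1 else 0 := by
  rw [← ent_mk _ ha hb, rep_apply]

lemma rep_sdg {j : ℕ} (hj : j + 1 < n) :
    sdg (rep n i d p : Matrix (Fin n) (Fin n) k) j =
      if j ≠ i - 1 ∧ j ≠ d then 1 else 0 := by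
  rw [sdg, rep_ent (by omega) hj]
  by_cases hc : j ≠ i - 1 ∧ j ≠ d
  · rw [if_pos hc, if_pos (Or.inl ⟨rfl, hc.1, hc.2⟩)]
  · rw [if_neg hc, if_neg]
    rintro (⟨-, h2, h3⟩ | ⟨h1, h2⟩)
    · exact hc ⟨h2, h3⟩
    · omega

lemma mul_rep_single {h' : Matrix (Fin n) (Fin n) k} (a b : Fin n) (c₀ : ℕ) (hc₀ : c₀ < n)
    (hbc : ∀ c : ℕ, c < n → ((((b : ℕ) = c + 1 ∧ c ≠ i - 1 ∧ c ≠ d) ∨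
      (c = p ∧ (b : ℕ) = p + 2)) ↔ c = c₀)) :
    (h' * (rep n i d p : Matrix (Fin n) (Fin n) k)) a b = h' a ⟨c₀, hc₀⟩ := by
  rw [mul_apply, Finset.sum_eq_single_of_mem ⟨c₀, hc₀⟩ (Finset.mem_univ _)]
  · rw [rep_apply, if_pos ((hbc c₀ hc₀).mpr rfl), mul_one]
  · intro c _ hc
    rw [rep_apply, if_neg (fun hcond => hc (Fin.ext ((hbc (c:ℕ) c.2).mp hcond))), mul_zero]

lemma mul_rep_zero {h' : Matrix (Fin n) (Fin n) k} (a b : Fin n)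
    (hbc : ∀ c : ℕ, c < n → ¬ (((b : ℕ) = c + 1 ∧ c ≠ i - 1 ∧ c ≠ d) ∨
      (c = p ∧ (b : ℕ) = p + 2))) :
    (h' * (rep n i d p : Matrix (Fin n) (Fin n) k)) a b = 0 := by
  rw [mul_apply]
  apply Finset.sum_eq_zero
  intro c _
  rw [rep_apply, if_neg (hbc (c:ℕ) c.2), mul_zero]

/-- from an invertible upper-triangular intertwiner to B-orbit membership -/
lemma orbit_of_hmat [IsAlgClosed k] {x e h : Matrix (Fin n) (Fin n) k} (hn : 0 < n)
    (hh : IsUpperTri h) (hdiag : ∀ b, h b b ≠ 0) (heq : x * h = h * e) :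
    ∃ g : Matrix (Fin n) (Fin n) k, IsUpperTri g ∧ g.det = 1 ∧ x = g * e * g⁻¹ := by
  have hdet : h.det ≠ 0 := by
    rw [det_eq_prod_diag hh]
    exact Finset.prod_ne_zero_iff.mpr fun b _ => hdiag b
  have hu : IsUnit h.det := Ne.isUnit hdet
  have hxh : x = h * e * h⁻¹ := by
    calc x = x * (h * h⁻¹) := by rw [Matrix.mul_nonsing_inv h hu, Matrix.mul_one]
    _ = (x * h) * h⁻¹ := by rw [Matrix.mul_assoc]
    _ = h * e * h⁻¹ := by rw [heq]
  obtain ⟨c, hc⟩ := IsAlgClosed.exists_pow_nat_eq (h.det)⁻¹ (n := n) (by omega)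
  have hcne : c ≠ 0 := by
    intro h0
    rw [h0] at hc
    have : (0:k) ^ n = 0 := zero_pow (by omega)
    rw [this] at hc
    exact inv_ne_zero hdet hc.symm
  refine ⟨c • h, fun a b hba => by simp [Matrix.smul_apply, hh a b hba], ?_, ?_⟩
  · rw [Matrix.det_smul, Fintype.card_fin, hc, inv_mul_cancel₀ hdet]
  · have hginv : (c • h)⁻¹ = c⁻¹ • h⁻¹ := by
      apply Matrix.inv_eq_right_inv
      rw [Matrix.smul_mul, Matrix.mul_smul, smul_smul, Matrix.mul_nonsing_inv h hu,
        mul_inv_cancel₀ hcne, one_smul]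
    rw [hginv, Matrix.smul_mul, Matrix.smul_mul, Matrix.mul_smul, smul_smul,
      mul_inv_cancel₀ hcne, one_smul, hxh]

section cases
variable [IsAlgClosed k]
variable {x : Matrix (Fin n) (Fin n) k} {i : ℕ}

lemma build_case2 (hx : IsStrictUpperTri x) (hn : 4 ≤ n) (hi1 : 2 ≤ i) (hi2 : i ≤ n - 2)
    (h0 : sdg x (i-1) = 0)
    (hlow : ∀ c, c < i - 2 → sdg x c ≠ 0)
    (hhigh : ∀ c, i + 1 ≤ c → c ≤ n - 2 → sdg x c ≠ 0)
    (hmid : MID x i ≠ 0) (hdi : sdg x i = 0) :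
    ∃ g : Matrix (Fin n) (Fin n) k, IsUpperTri g ∧ g.det = 1 ∧
      x = g * (rep n i i (i-1) : Matrix (Fin n) (Fin n) k) * g⁻¹ := by
  have hsd2 : sdg x (i-2) ≠ 0 ∧ ent x (i-1) (i+1) ≠ 0 := by
    rw [MID, hdi, mul_zero, zero_add] at hmid
    exact ⟨left_ne_zero_of_mul hmid, right_ne_zero_of_mul hmid⟩
  have hstrictN : ∀ a b : ℕ, b ≤ a → ent x a b = 0 := fun a b h => ent_strict hx h
  have hT : ∀ r, r + 2 ≤ i → ent x r (r+1) ≠ 0 := by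
    intro r hr
    rcases Nat.lt_or_ge r (i-2) with h | h
    · exact hlow r h
    · rw [show r = i - 2 by omega]
      exact hsd2.1
  have h0' : ent x (i-1) i = 0 := by
    rw [show i = i - 1 + 1 by omega]
    exact h0
  have hsp : ∀ b, b < i → ∃ c, b+1 ≤ c ∧ c ≤ n-2 ∧ sdg x c = 0 := by
    intro b hb
    rcases Nat.lt_or_ge b (i-1) with h | h
    · exact ⟨i-1, by omega, by omega, h0⟩
    · exact ⟨i, by omega, by omega, hdi⟩
  have hdlow : ∀ b, b < i → ent (x ^ (n-2-b)) b (n-1) ≠ 0 := by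
    intro b hb
    rcases Nat.lt_or_ge b (i-1) with h | h
    · have hC := entC hx hn hi1 hi2 h0 (a := b) (n-2-b) (by omega) (by omega) (by omega)
      rw [show b + (n-2-b) + 1 = n-1 by omega, show b + (n-2-b) = n-2 by omega] at hC
      rw [hC]
      refine mul_ne_zero (mul_ne_zero ?_ hmid) ?_
      · rw [Finset.prod_ne_zero_iff]
        intro c hc
        rw [Finset.mem_Ico] at hc
        exact hlow c (by omega)
      · rw [Finset.prod_ne_zero_iff]
        intro c hc
        rw [Finset.mem_Icc] at hc
        exact hhigh c hc.1 hc.2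
    · have hb' : b = i - 1 := by omega
      have hpl := peelL hx (n-2-i) (i-1) (by omega)
      rw [show i-1 + (n-2-i) + 2 = n-1 by omega, h0, zero_mul, zero_add,
        show i-1+2 = i+1 by omega] at hpl
      rw [hb', show n-2-(i-1) = (n-2-i)+1 by omega, hpl]
      apply mul_ne_zero hsd2.2
      have hd := pow_ent_diag hx (a := i+1) (n-2-i) (by omega)
      rw [show i+1 + (n-2-i) = n-1 by omega] at hd
      rw [hd, Finset.prod_ne_zero_iff]
      intro c hc
      rw [Finset.mem_range] at hc
      exact hhigh (i+1+c) (by omega) (by omega)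
  have htri := hmat_tri (m := i) (zf := fun _ => (0:k)) (top := (1:k))
    hx hn hi1 hi2 h0 (by omega) (by omega) hsp
  have hdiag := hmat_diag (m := i) (zf := fun _ => (0:k)) (top := (1:k))
    hx hn hi1 hi2 h0 (by omega) (by omega) hdlow (fun c h1 h2 => hhigh c h1 h2) one_ne_zero
  have heq : x * hmat x i (fun _ => (0:k)) 1 = hmat x i (fun _ => (0:k)) 1 *
      (rep n i i (i-1) : Matrix (Fin n) (Fin n) k) := by
    ext a b
    have hbn := b.2
    rw [mul_hmat]
    by_cases hb0 : (b : ℕ) = 0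
    · rw [if_neg (by omega)]
      rw [mul_rep_zero _ _ (fun c hc => by omega)]
      rw [show psif n i (b:ℕ) = n - 2 by unfold psif; rw [if_neg (by omega)]; omega]
      rw [show n - 2 + 1 = n - 1 by omega]
      exact xpow_n1_col hx hn hi1 hi2 h0 _
    · by_cases hbm : (b : ℕ) = i
      · rw [if_pos hbm]
        have hrow : ∑ c ∈ range n, ent x (a:ℕ) c * bsolve (ent x) (fun _ => (0:k)) 1 i c
            = 0 := by
          rcases Nat.lt_or_ge (a:ℕ) i with h | h
          · exact bsolve_row n hstrictN hT (by rw [mul_one]; exact h0') (by omega)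
              (by omega) _ h
          · exact bsolve_row_ge n hstrictN (by omega) _ h
        rw [hrow, mul_rep_zero _ _ (fun c hc => by omega)]
      · by_cases hbs : (b : ℕ) = i + 1
        · rw [if_neg (by omega)]
          rw [mul_rep_single _ _ (i-1) (by omega) (fun c hc => by omega)]
          rw [hmat_apply' _ (by omega : i - 1 < n), if_neg (by omega)]
          rw [show psif n i (i-1) = psif n i (b:ℕ) + 1 by
            unfold psif; split_ifs <;> omega]
        · rw [if_neg (by omega)]
          rw [mul_rep_single _ _ ((b:ℕ)-1) (by omega) (fun c hc => by omega)]
          rw [hmat_apply' _ (by omega : (b:ℕ) - 1 < n), if_neg (by omega)]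
          rw [show psif n i ((b:ℕ)-1) = psif n i (b:ℕ) + 1 by
            unfold psif; split_ifs <;> omega]
  exact orbit_of_hmat (by omega) htri hdiag heq

lemma build_case1 (hx : IsStrictUpperTri x) (hn : 4 ≤ n) (hi1 : 2 ≤ i) (hi2 : i ≤ n - 2)
    (h0 : sdg x (i-1) = 0)
    (hlow : ∀ c, c < i - 2 → sdg x c ≠ 0)
    (hhigh : ∀ c, i + 1 ≤ c → c ≤ n - 2 → sdg x c ≠ 0)
    (hmid : MID x i ≠ 0) (hd2 : sdg x (i-2) = 0) :
    ∃ g : Matrix (Fin n) (Fin n) k, IsUpperTri g ∧ g.det = 1 ∧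
      x = g * (rep n i (i-2) (i-2) : Matrix (Fin n) (Fin n) k) * g⁻¹ := by
  have hsd2 : ent x (i-2) i ≠ 0 ∧ sdg x i ≠ 0 := by
    rw [MID, hd2, zero_mul, add_zero] at hmid
    exact ⟨left_ne_zero_of_mul hmid, right_ne_zero_of_mul hmid⟩
  have hstrictN : ∀ a b : ℕ, b ≤ a → ent x a b = 0 := fun a b h => ent_strict hx h
  have hT : ∀ r, r + 2 ≤ i - 1 → ent x r (r+1) ≠ 0 := fun r hr => hlow r (by omega)
  have hd2' : ent x (i-2) (i-1) = 0 := by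
    rw [show i - 1 = i - 2 + 1 by omega]
    exact hd2
  have hsp : ∀ b, b < i - 1 → ∃ c, b+1 ≤ c ∧ c ≤ n-2 ∧ sdg x c = 0 := by
    intro b hb
    exact ⟨i-1, by omega, by omega, h0⟩
  have hdlow : ∀ b, b < i - 1 → ent (x ^ (n-2-b)) b (n-1) ≠ 0 := by
    intro b hb
    have hC := entC hx hn hi1 hi2 h0 (a := b) (n-2-b) (by omega) (by omega) (by omega)
    rw [show b + (n-2-b) + 1 = n-1 by omega, show b + (n-2-b) = n-2 by omega] at hC
    rw [hC]
    refine mul_ne_zero (mul_ne_zero ?_ hmid) ?_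
    · rw [Finset.prod_ne_zero_iff]
      intro c hc
      rw [Finset.mem_Ico] at hc
      exact hlow c (by omega)
    · rw [Finset.prod_ne_zero_iff]
      intro c hc
      rw [Finset.mem_Icc] at hc
      exact hhigh c hc.1 hc.2
  have hT3 : ∀ c, i - 1 + 1 ≤ c → c ≤ n - 2 → sdg x c ≠ 0 := by
    intro c h1 h2
    rcases Nat.lt_or_ge c (i+1) with h | h
    · rw [show c = i by omega]
      exact hsd2.2
    · exact hhigh c h h2
  have htri := hmat_tri (m := i-1) (zf := fun _ => (0:k)) (top := (1:k))
    hx hn hi1 hi2 h0 (by omega) (by omega) hsp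
  have hdiag := hmat_diag (m := i-1) (zf := fun _ => (0:k)) (top := (1:k))
    hx hn hi1 hi2 h0 (by omega) (by omega) hdlow hT3 one_ne_zero
  have heq : x * hmat x (i-1) (fun _ => (0:k)) 1 = hmat x (i-1) (fun _ => (0:k)) 1 *
      (rep n i (i-2) (i-2) : Matrix (Fin n) (Fin n) k) := by
    ext a b
    have hbn := b.2
    rw [mul_hmat]
    by_cases hb0 : (b : ℕ) = 0
    · rw [if_neg (by omega)]
      rw [mul_rep_zero _ _ (fun c hc => by omega)]
      rw [show psif n (i-1) (b:ℕ) = n - 2 by unfold psif; rw [if_neg (by omega)]; omega]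
      rw [show n - 2 + 1 = n - 1 by omega]
      exact xpow_n1_col hx hn hi1 hi2 h0 _
    · by_cases hbm : (b : ℕ) = i - 1
      · rw [if_pos hbm]
        have hrow : ∑ c ∈ range n,
            ent x (a:ℕ) c * bsolve (ent x) (fun _ => (0:k)) 1 (i-1) c = 0 := by
          rcases Nat.lt_or_ge (a:ℕ) (i-1) with h | h
          · exact bsolve_row n hstrictN hT (by rw [mul_one]; exact hd2') (by omega)
              (by omega) _ h
          · exact bsolve_row_ge n hstrictN (by omega) _ h
        rw [hrow, mul_rep_zero _ _ (fun c hc => by omega)]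
      · by_cases hbs : (b : ℕ) = i
        · rw [if_neg (by omega)]
          rw [mul_rep_single _ _ (i-2) (by omega) (fun c hc => by omega)]
          rw [hmat_apply' _ (by omega : i - 2 < n), if_neg (by omega)]
          rw [show psif n (i-1) (i-2) = psif n (i-1) (b:ℕ) + 1 by
            unfold psif; split_ifs <;> omega]
        · rw [if_neg (by omega)]
          rw [mul_rep_single _ _ ((b:ℕ)-1) (by omega) (fun c hc => by omega)]
          rw [hmat_apply' _ (by omega : (b:ℕ) - 1 < n), if_neg (by omega)]
          rw [show psif n (i-1) ((b:ℕ)-1) = psif n (i-1) (b:ℕ) + 1 by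
            unfold psif; split_ifs <;> omega]
  exact orbit_of_hmat (by omega) htri hdiag heq

lemma build_case3 (hx : IsStrictUpperTri x) (hn : 4 ≤ n) (hi1 : 2 ≤ i) (hi2 : i ≤ n - 2)
    (h0 : sdg x (i-1) = 0)
    (hlow : ∀ c, c < i - 2 → sdg x c ≠ 0)
    (hhigh : ∀ c, i + 1 ≤ c → c ≤ n - 2 → sdg x c ≠ 0)
    (hmid : MID x i ≠ 0) (hsd2 : sdg x (i-2) ≠ 0) (hdi : sdg x i ≠ 0) :
    ∃ g : Matrix (Fin n) (Fin n) k, IsUpperTri g ∧ g.det = 1 ∧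
      x = g * (rep n i (i-1) (i-2) : Matrix (Fin n) (Fin n) k) * g⁻¹ := by
  set zf : ℕ → k := fun r => ent (x ^ (n-i)) r (n-1) with hzf
  set top : k := (sdg x (i-2))⁻¹ * zf (i-2) with htopdef
  have hstrictN : ∀ a b : ℕ, b ≤ a → ent x a b = 0 := fun a b h => ent_strict hx h
  have hT : ∀ r, r + 2 ≤ i - 1 → ent x r (r+1) ≠ 0 := fun r hr => hlow r (by omega)
  have hzf_m : ∀ r, i - 1 ≤ r → zf r = 0 := by
    intro r hr
    rcases Nat.lt_or_ge (i-1) r with h | h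
    · exact pow_ent_zero hx _ (by omega)
    · have hr' : r = i - 1 := by omega
      have hd := pow_ent_diag hx (a := i-1) (n-i) (by omega)
      rw [show i-1 + (n-i) = n-1 by omega] at hd
      rw [hr']
      show ent (x ^ (n-i)) (i-1) (n-1) = 0
      rw [hd]
      apply Finset.prod_eq_zero (i := 0) (Finset.mem_range.mpr (by omega))
      rw [add_zero, h0]
  have hzf_top : zf (i-2) ≠ 0 := by
    have hC := entC hx hn hi1 hi2 h0 (a := i-2) (n-i) (by omega) (by omega) (by omega)
    rw [show i-2 + (n-i) + 1 = n-1 by omega, show i-2 + (n-i) = n-2 by omega,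
      Finset.Ico_self, Finset.prod_empty, one_mul] at hC
    show ent (x ^ (n-i)) (i-2) (n-1) ≠ 0
    rw [hC]
    refine mul_ne_zero hmid ?_
    rw [Finset.prod_ne_zero_iff]
    intro c hc
    rw [Finset.mem_Icc] at hc
    exact hhigh c hc.1 hc.2
  have htopne : top ≠ 0 := mul_ne_zero (inv_ne_zero hsd2) hzf_top
  have hrowtop : ent x (i-1-1) (i-1) * top = zf (i-1-1) := by
    rw [show i - 1 - 1 = i - 2 by omega, htopdef,
      show ent x (i-2) (i-1) = sdg x (i-2) by rw [sdg, show i-2+1 = i-1 by omega],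
      ← mul_assoc, mul_inv_cancel₀ hsd2, one_mul]
  have hsp : ∀ b, b < i - 1 → ∃ c, b+1 ≤ c ∧ c ≤ n-2 ∧ sdg x c = 0 := by
    intro b hb
    exact ⟨i-1, by omega, by omega, h0⟩
  have hdlow : ∀ b, b < i - 1 → ent (x ^ (n-2-b)) b (n-1) ≠ 0 := by
    intro b hb
    have hC := entC hx hn hi1 hi2 h0 (a := b) (n-2-b) (by omega) (by omega) (by omega)
    rw [show b + (n-2-b) + 1 = n-1 by omega, show b + (n-2-b) = n-2 by omega] at hC
    rw [hC]
    refine mul_ne_zero (mul_ne_zero ?_ hmid) ?_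
    · rw [Finset.prod_ne_zero_iff]
      intro c hc
      rw [Finset.mem_Ico] at hc
      exact hlow c (by omega)
    · rw [Finset.prod_ne_zero_iff]
      intro c hc
      rw [Finset.mem_Icc] at hc
      exact hhigh c hc.1 hc.2
  have hT3 : ∀ c, i - 1 + 1 ≤ c → c ≤ n - 2 → sdg x c ≠ 0 := by
    intro c h1 h2
    rcases Nat.lt_or_ge c (i+1) with h | h
    · rw [show c = i by omega]
      exact hdi
    · exact hhigh c h h2
  have htri := hmat_tri (m := i-1) (zf := zf) (top := top)
    hx hn hi1 hi2 h0 (by omega) (by omega) hsp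
  have hdiag := hmat_diag (m := i-1) (zf := zf) (top := top)
    hx hn hi1 hi2 h0 (by omega) (by omega) hdlow hT3 htopne
  have heq : x * hmat x (i-1) zf top = hmat x (i-1) zf top *
      (rep n i (i-1) (i-2) : Matrix (Fin n) (Fin n) k) := by
    ext a b
    have hbn := b.2
    rw [mul_hmat]
    by_cases hb0 : (b : ℕ) = 0
    · rw [if_neg (by omega)]
      rw [mul_rep_zero _ _ (fun c hc => by omega)]
      rw [show psif n (i-1) (b:ℕ) = n - 2 by unfold psif; rw [if_neg (by omega)]; omega]
      rw [show n - 2 + 1 = n - 1 by omega]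
      exact xpow_n1_col hx hn hi1 hi2 h0 _
    · by_cases hbm : (b : ℕ) = i - 1
      · rw [if_pos hbm]
        have hrow : ∑ c ∈ range n,
            ent x (a:ℕ) c * bsolve (ent x) zf top (i-1) c = zf (a:ℕ) := by
          rcases Nat.lt_or_ge (a:ℕ) (i-1) with h | h
          · exact bsolve_row n hstrictN hT hrowtop (by omega) (by omega) _ h
          · rw [bsolve_row_ge n hstrictN (by omega) _ h, hzf_m _ h]
        rw [hrow, mul_rep_single _ _ (i-2) (by omega) (fun c hc => by omega)]
        rw [hmat_apply' _ (by omega : i - 2 < n), if_neg (by omega)]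
        rw [show psif n (i-1) (i-2) = n - i by unfold psif; rw [if_neg (by omega)]; omega]
      · by_cases hbs : (b : ℕ) = i
        · rw [if_neg (by omega)]
          rw [mul_rep_single _ _ (i-2) (by omega) (fun c hc => by omega)]
          rw [hmat_apply' _ (by omega : i - 2 < n), if_neg (by omega)]
          rw [show psif n (i-1) (i-2) = psif n (i-1) (b:ℕ) + 1 by
            unfold psif; split_ifs <;> omega]
        · rw [if_neg (by omega)]
          rw [mul_rep_single _ _ ((b:ℕ)-1) (by omega) (fun c hc => by omega)]
          rw [hmat_apply' _ (by omega : (b:ℕ) - 1 < n), if_neg (by omega)]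
          rw [show psif n (i-1) ((b:ℕ)-1) = psif n (i-1) (b:ℕ) + 1 by
            unfold psif; split_ifs <;> omega]
  exact orbit_of_hmat (by omega) htri hdiag heq

end cases

section repfacts
variable {i d p : ℕ}

lemma rep_prod_low (hn : 4 ≤ n) (hi2 : i ≤ n - 2) (hd1 : i - 2 ≤ d) :
    ∏ c ∈ range (i-2), sdg (rep n i d p : Matrix (Fin n) (Fin n) k) c = 1 := by
  apply Finset.prod_eq_one
  intro c hc
  have hc' := Finset.mem_range.mp hc
  rw [rep_sdg (by omega), if_pos ⟨by omega, by omega⟩]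

lemma rep_prod_high (hn : 4 ≤ n) (hi1 : 2 ≤ i) (hi2 : i ≤ n - 2) (hd2 : d ≤ i) :
    ∏ c ∈ Icc (i+1) (n-2), sdg (rep n i d p : Matrix (Fin n) (Fin n) k) c = 1 := by
  apply Finset.prod_eq_one
  intro c hc
  have hc' := Finset.mem_Icc.mp hc
  rw [rep_sdg (by omega), if_pos ⟨by omega, by omega⟩]

lemma rep_sdg_im1 (hn : 4 ≤ n) (hi1 : 2 ≤ i) (hi2 : i ≤ n - 2) :
    sdg (rep n i d p : Matrix (Fin n) (Fin n) k) (i-1) = 0 := by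
  rw [rep_sdg (by omega), if_neg (by omega)]

lemma rep_MID_e1 (hn : 4 ≤ n) (hi1 : 2 ≤ i) (hi2 : i ≤ n - 2) :
    MID (rep n i (i-2) (i-2) : Matrix (Fin n) (Fin n) k) i = 1 := by
  rw [MID, rep_ent (by omega) (by omega), rep_sdg (j := i) (by omega),
    rep_sdg (j := i-2) (by omega), rep_ent (by omega) (by omega)]
  rw [if_pos (Or.inr ⟨rfl, by omega⟩), if_pos (⟨by omega, by omega⟩ : i ≠ i-1 ∧ i ≠ i-2),
    if_neg (by omega : ¬(i-2 ≠ i-1 ∧ i-2 ≠ i-2)), if_neg (by omega)]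
  norm_num

lemma rep_MID_e2 (hn : 4 ≤ n) (hi1 : 2 ≤ i) (hi2 : i ≤ n - 2) :
    MID (rep n i i (i-1) : Matrix (Fin n) (Fin n) k) i = 1 := by
  rw [MID, rep_ent (by omega) (by omega), rep_sdg (j := i) (by omega),
    rep_sdg (j := i-2) (by omega), rep_ent (by omega) (by omega)]
  rw [if_neg (by omega), if_neg (by omega : ¬(i ≠ i-1 ∧ i ≠ i)),
    if_pos (⟨by omega, by omega⟩ : i-2 ≠ i-1 ∧ i-2 ≠ i),
    if_pos (Or.inr ⟨rfl, by omega⟩)]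
  norm_num

lemma rep_MID_e3 (hn : 4 ≤ n) (hi1 : 2 ≤ i) (hi2 : i ≤ n - 2) :
    MID (rep n i (i-1) (i-2) : Matrix (Fin n) (Fin n) k) i = 1 := by
  rw [MID, rep_ent (by omega) (by omega), rep_sdg (j := i) (by omega),
    rep_sdg (j := i-2) (by omega), rep_ent (by omega) (by omega)]
  rw [if_pos (Or.inr ⟨rfl, by omega⟩), if_pos (⟨by omega, by omega⟩ : i ≠ i-1 ∧ i ≠ i-1),
    if_pos (⟨by omega, by omega⟩ : i-2 ≠ i-1 ∧ i-2 ≠ i-1), if_neg (by omega)]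
  norm_num

end repfacts

section orbitmem
variable {i : ℕ}

lemma borbit_facts (hn : 4 ≤ n) (hi1 : 2 ≤ i) (hi2 : i ≤ n - 2)
    {e y : Matrix (Fin n) (Fin n) k} (he : IsStrictUpperTri e) (he0 : sdg e (i-1) = 0)
    (hp1 : (∏ c ∈ range (i-2), sdg e c) ≠ 0)
    (hp2 : (∏ c ∈ Icc (i+1) (n-2), sdg e c) ≠ 0)
    (hm : MID e i ≠ 0)
    (hy : y ∈ Borbit e) :
    IsStrictUpperTri y ∧ y ^ (n-2) ≠ 0 ∧
      (∀ j, j + 1 < n → (sdg y j = 0 ↔ sdg e j = 0)) := by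
  obtain ⟨g, hg, hdet, rfl⟩ := hy
  refine ⟨conj_strict hg hdet he, ?_, ?_⟩
  · exact conj_ne_zero hdet _ ((pow_n2_ne he hn hi1 hi2 he0).mpr ⟨hp1, hm, hp2⟩)
  · intro j hj
    have h1 : ent g j j ≠ 0 := by
      rw [← ent_mk g (by omega) (by omega)]
      exact diag_ne_zero hg hdet _
    have h2 : ent g⁻¹ (j+1) (j+1) ≠ 0 := by
      rw [← ent_mk _ hj hj]
      exact diag_ne_zero (inv_upper hg hdet) (inv_det_one hdet) _
    show ent (g * e * g⁻¹) j (j+1) = 0 ↔ ent e j (j+1) = 0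
    rw [conj_sdg hg hdet he hj]
    constructor
    · intro h
      rcases mul_eq_zero.mp h with h' | h'
      · rcases mul_eq_zero.mp h' with h'' | h''
        · exact absurd h'' h1
        · exact h''
      · exact absurd h' h2
    · intro h
      rw [h, mul_zero, zero_mul]

end orbitmem
end ThreeOrb

open ThreeOrb

/-- Let `n ≥ 4`, `2 ≤ i ≤ n-2`, and let `S` be the set of strictly upper triangular
matrices `x` with `x_{i,i+1} = 0` and `x^(n-2) ≠ 0`, i.e. the intersection of the
subregular nilpotent orbit with the nilradical `u_{α_i}`.  Then `S` is the union of exactly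
three `B`-orbits: the subset where `x_{i-1,i} = 0` is one orbit, the subset where
`x_{i+1,i+2} = 0` is another, these two subsets are disjoint, and the subset where both
`x_{i-1,i} ≠ 0` and `x_{i+1,i+2} ≠ 0` is a single (dense) orbit. -/
theorem three_Borbits_in_subregular_meet_u_alphai {k : Type*} [Field k] [IsAlgClosed k]
    {n i : ℕ} (hn : 4 ≤ n) (hi1 : 2 ≤ i) (hi2 : i ≤ n - 2)
    (S : Set (Matrix (Fin n) (Fin n) k))
    (hS : S = { x | IsStrictUpperTri x ∧ x ⟨i - 1, by omega⟩ ⟨i, by omega⟩ = 0 ∧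
      x ^ (n - 2) ≠ 0 }) :
    (∃ e₁ : Matrix (Fin n) (Fin n) k,
      { x ∈ S | x ⟨i - 2, by omega⟩ ⟨i - 1, by omega⟩ = 0 } = Borbit e₁) ∧
    (∃ e₂ : Matrix (Fin n) (Fin n) k,
      { x ∈ S | x ⟨i, by omega⟩ ⟨i + 1, by omega⟩ = 0 } = Borbit e₂) ∧
    { x ∈ S | x ⟨i - 2, by omega⟩ ⟨i - 1, by omega⟩ = 0 } ∩
      { x ∈ S | x ⟨i, by omega⟩ ⟨i + 1, by omega⟩ = 0 } = ∅ ∧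
    (∃ e₃ : Matrix (Fin n) (Fin n) k,
      { x ∈ S | x ⟨i - 2, by omega⟩ ⟨i - 1, by omega⟩ ≠ 0 ∧
        x ⟨i, by omega⟩ ⟨i + 1, by omega⟩ ≠ 0 } = Borbit e₃) := by
  subst hS
  -- entry conversions
  have c01 : ∀ y : Matrix (Fin n) (Fin n) k,
      y ⟨i - 1, by omega⟩ ⟨i, by omega⟩ = sdg y (i-1) := by
    intro y
    rw [ent_mk y (show i-1 < n by omega) (show i < n by omega)]
    unfold sdg
    rw [show i-1+1 = i by omega]
  have c02 : ∀ y : Matrix (Fin n) (Fin n) k,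
      y ⟨i - 2, by omega⟩ ⟨i - 1, by omega⟩ = sdg y (i-2) := by
    intro y
    rw [ent_mk y (show i-2 < n by omega) (show i-1 < n by omega)]
    unfold sdg
    rw [show i-2+1 = i-1 by omega]
  have c03 : ∀ y : Matrix (Fin n) (Fin n) k,
      y ⟨i, by omega⟩ ⟨i + 1, by omega⟩ = sdg y i := by
    intro y
    exact ent_mk y (show i < n by omega) (show i+1 < n by omega)
  -- facts about the three representatives
  have hE1str : IsStrictUpperTri (rep n i (i-2) (i-2) : Matrix (Fin n) (Fin n) k) := rep_strict
  have hE2str : IsStrictUpperTri (rep n i i (i-1) : Matrix (Fin n) (Fin n) k) := rep_strict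
  have hE3str : IsStrictUpperTri (rep n i (i-1) (i-2) : Matrix (Fin n) (Fin n) k) := rep_strict
  refine ⟨⟨rep n i (i-2) (i-2), ?_⟩, ⟨rep n i i (i-1), ?_⟩, ?_, ⟨rep n i (i-1) (i-2), ?_⟩⟩
  · -- first orbit
    ext y
    simp only [Set.mem_setOf_eq]
    constructor
    · rintro ⟨⟨hstrict, h0m, hpow⟩, hcond⟩
      rw [c01 y] at h0m
      rw [c02 y] at hcond
      obtain ⟨hp1, hmid, hp2⟩ := (pow_n2_ne hstrict hn hi1 hi2 h0m).mp hpow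
      exact build_case1 hstrict hn hi1 hi2 h0m
        (fun c hc => Finset.prod_ne_zero_iff.mp hp1 c (Finset.mem_range.mpr hc))
        (fun c h1 h2 => Finset.prod_ne_zero_iff.mp hp2 c (Finset.mem_Icc.mpr ⟨h1, h2⟩))
        hmid hcond
    · intro hy
      obtain ⟨hstr, hpow, hiff⟩ := borbit_facts hn hi1 hi2 hE1str
        (rep_sdg_im1 hn hi1 hi2)
        (by rw [rep_prod_low hn hi2 (by omega)]; exact one_ne_zero)
        (by rw [rep_prod_high hn hi1 hi2 (by omega)]; exact one_ne_zero)
        (by rw [rep_MID_e1 hn hi1 hi2]; exact one_ne_zero) hy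
      refine ⟨⟨hstr, ?_, hpow⟩, ?_⟩
      · rw [c01 y]
        exact (hiff (i-1) (by omega)).mpr (rep_sdg_im1 hn hi1 hi2)
      · rw [c02 y]
        refine (hiff (i-2) (by omega)).mpr ?_
        rw [rep_sdg (by omega), if_neg (by omega)]
  · -- second orbit
    ext y
    simp only [Set.mem_setOf_eq]
    constructor
    · rintro ⟨⟨hstrict, h0m, hpow⟩, hcond⟩
      rw [c01 y] at h0m
      rw [c03 y] at hcond
      obtain ⟨hp1, hmid, hp2⟩ := (pow_n2_ne hstrict hn hi1 hi2 h0m).mp hpow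
      exact build_case2 hstrict hn hi1 hi2 h0m
        (fun c hc => Finset.prod_ne_zero_iff.mp hp1 c (Finset.mem_range.mpr hc))
        (fun c h1 h2 => Finset.prod_ne_zero_iff.mp hp2 c (Finset.mem_Icc.mpr ⟨h1, h2⟩))
        hmid hcond
    · intro hy
      obtain ⟨hstr, hpow, hiff⟩ := borbit_facts hn hi1 hi2 hE2str
        (rep_sdg_im1 hn hi1 hi2)
        (by rw [rep_prod_low hn hi2 (by omega)]; exact one_ne_zero)
        (by rw [rep_prod_high hn hi1 hi2 (by omega)]; exact one_ne_zero)
        (by rw [rep_MID_e2 hn hi1 hi2]; exact one_ne_zero) hy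
      refine ⟨⟨hstr, ?_, hpow⟩, ?_⟩
      · rw [c01 y]
        exact (hiff (i-1) (by omega)).mpr (rep_sdg_im1 hn hi1 hi2)
      · rw [c03 y]
        refine (hiff i (by omega)).mpr ?_
        rw [rep_sdg (by omega), if_neg (by omega)]
  · -- disjointness
    rw [Set.eq_empty_iff_forall_notMem]
    rintro y ⟨⟨⟨hstrict, h0m, hpow⟩, h1⟩, ⟨-, h2⟩⟩
    rw [c01 y] at h0m
    rw [c02 y] at h1
    rw [c03 y] at h2
    obtain ⟨-, hmid, -⟩ := (pow_n2_ne hstrict hn hi1 hi2 h0m).mp hpow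
    apply hmid
    rw [MID, h1, h2, mul_zero, zero_mul, add_zero]
  · -- third orbit
    ext y
    simp only [Set.mem_setOf_eq]
    constructor
    · rintro ⟨⟨hstrict, h0m, hpow⟩, hcond1, hcond2⟩
      rw [c01 y] at h0m
      rw [c02 y] at hcond1
      rw [c03 y] at hcond2
      obtain ⟨hp1, hmid, hp2⟩ := (pow_n2_ne hstrict hn hi1 hi2 h0m).mp hpow
      exact build_case3 hstrict hn hi1 hi2 h0m
        (fun c hc => Finset.prod_ne_zero_iff.mp hp1 c (Finset.mem_range.mpr hc))
        (fun c h1 h2 => Finset.prod_ne_zero_iff.mp hp2 c (Finset.mem_Icc.mpr ⟨h1, h2⟩))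
        hmid hcond1 hcond2
    · intro hy
      obtain ⟨hstr, hpow, hiff⟩ := borbit_facts hn hi1 hi2 hE3str
        (rep_sdg_im1 hn hi1 hi2)
        (by rw [rep_prod_low hn hi2 (by omega)]; exact one_ne_zero)
        (by rw [rep_prod_high hn hi1 hi2 (by omega)]; exact one_ne_zero)
        (by rw [rep_MID_e3 hn hi1 hi2]; exact one_ne_zero) hy
      refine ⟨⟨hstr, ?_, hpow⟩, ?_, ?_⟩
      · rw [c01 y]
        exact (hiff (i-1) (by omega)).mpr (rep_sdg_im1 hn hi1 hi2)
      · rw [c02 y]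
        intro hz
        have := (hiff (i-2) (by omega)).mp hz
        rw [rep_sdg (by omega), if_pos ⟨by omega, by omega⟩] at this
        exact one_ne_zero this
      · rw [c03 y]
        intro hz
        have := (hiff i (by omega)).mp hz
        rw [rep_sdg (by omega), if_pos ⟨by omega, by omega⟩] at this
        exact one_ne_zero this
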